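/- Suppose α_j² = 0 in R_A for every j = 1,…,n. Then the ℚ-algebra homomorphism ℚ[y_1,…,y_n]/(y_j² : j = 1,…,n) → R_A ⊗ ℚ determined by y_j ↦ x_j − α_j/2 is a well-defined ring isomorphism, and it carries the ℚ-span of y_1,…,y_n onto the ℚ-span of x_1,…,x_n. In particular, the rational cohomology ring of the Bott manifold associated to A is isomorphic as a graded ring to that of (ℂP¹)ⁿ (i.e., the Bott manifold is ℚ-trivial). -/

import Mathlib

/-!
Context: R_A := ℤ[x_1,…,x_n]/(x_j² − α_j x_j) with α_j = Σ_{i<j} A^i_j x_i.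
R_A ⊗ ℚ = ℚ[x_1,…,x_n]/(x_j² − α_j x_j) is the rational cohomology ring, and
ℚ[y_1,…,y_n]/(y_j²) is the rational cohomology ring of (ℂP¹)ⁿ.

STATEMENT 4: Suppose α_j² = 0 in R_A for every j.  Then the ℚ-algebra
homomorphism ℚ[y_1,…,y_n]/(y_j²) → R_A ⊗ ℚ determined by y_j ↦ x_j − α_j/2 is
a well-defined ring isomorphism, and it carries the ℚ-span of y_1,…,y_n onto
the ℚ-span of x_1,…,x_n.  In particular the Bott manifold associated to A is
ℚ-trivial.
-/

open MvPolynomial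

noncomputable section

def alphaP (n : ℕ) (A : Fin n → Fin n → ℤ) (j : Fin n) : MvPolynomial (Fin n) ℤ :=
  ∑ i ∈ Finset.univ.filter (· < j), C (A i j) * X i

def bottIdeal (n : ℕ) (A : Fin n → Fin n → ℤ) : Ideal (MvPolynomial (Fin n) ℤ) :=
  Ideal.span (Set.range fun j => X j ^ 2 - alphaP n A j * X j)

abbrev BottRing (n : ℕ) (A : Fin n → Fin n → ℤ) : Type :=
  MvPolynomial (Fin n) ℤ ⧸ bottIdeal n A

/-- The image of α_j in R_A. -/
def balpha (n : ℕ) (A : Fin n → Fin n → ℤ) (j : Fin n) : BottRing n A :=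
  Ideal.Quotient.mk (bottIdeal n A) (alphaP n A j)

/-- α_j with rational coefficients. -/
def alphaQ (n : ℕ) (A : Fin n → Fin n → ℤ) (j : Fin n) : MvPolynomial (Fin n) ℚ :=
  ∑ i ∈ Finset.univ.filter (· < j), C ((A i j : ℚ)) * X i

def bottIdealQ (n : ℕ) (A : Fin n → Fin n → ℤ) : Ideal (MvPolynomial (Fin n) ℚ) :=
  Ideal.span (Set.range fun j => X j ^ 2 - alphaQ n A j * X j)

/-- R_A ⊗ ℚ = ℚ[x_1,…,x_n]/(x_j² − α_j x_j), the rational cohomology ring. -/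
abbrev BottRingQ (n : ℕ) (A : Fin n → Fin n → ℤ) : Type :=
  MvPolynomial (Fin n) ℚ ⧸ bottIdealQ n A

/-- The image x_i of X i in R_A ⊗ ℚ. -/
def bxQ (n : ℕ) (A : Fin n → Fin n → ℤ) (i : Fin n) : BottRingQ n A :=
  Ideal.Quotient.mk (bottIdealQ n A) (X i)

/-- The image of α_j in R_A ⊗ ℚ. -/
def balphaQ (n : ℕ) (A : Fin n → Fin n → ℤ) (j : Fin n) : BottRingQ n A :=
  Ideal.Quotient.mk (bottIdealQ n A) (alphaQ n A j)

/-- ℚ[y_1,…,y_n]/(y_j²), the rational cohomology ring of (ℂP¹)ⁿ. -/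
abbrev CPRing (n : ℕ) : Type :=
  MvPolynomial (Fin n) ℚ ⧸ Ideal.span (Set.range fun j : Fin n => (X j : MvPolynomial (Fin n) ℚ) ^ 2)

/-- The image y_i of X i in ℚ[y]/(y²). -/
def cy (n : ℕ) (i : Fin n) : CPRing n :=
  Ideal.Quotient.mk _ (X i)

section Aux
variable (n : ℕ) (A : Fin n → Fin n → ℤ)

abbrev MB := Finset (Fin n) →₀ ℚ
def eB (S : Finset (Fin n)) : MB n := Finsupp.single S 1
noncomputable def Lop : Fin n → (MB n →ₗ[ℚ] MB n)
  | j =>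
    Finsupp.lsum ℚ fun S => LinearMap.toSpanSingleton ℚ (MB n)
      (if j ∈ S then
        ∑ i ∈ (Finset.univ.filter (· < j)).attach,
          (A i.1 j : ℚ) • Lop i.1 (eB n S)
      else eB n (insert j S))
  termination_by j => j.val
  decreasing_by
    have hi := i.2
    simp only [Finset.mem_filter] at hi
    exact hi.2

lemma Lop_single (j : Fin n) (S : Finset (Fin n)) :
    Lop n A j (eB n S) = if j ∈ S then
        ∑ i ∈ Finset.univ.filter (· < j), (A i j : ℚ) • Lop n A i (eB n S)
      else eB n (insert j S) := by
  rw [Lop]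
  rw [show eB n S = Finsupp.single S (1:ℚ) from rfl]
  rw [Finsupp.lsum_single, LinearMap.toSpanSingleton_apply, one_smul]
  split_ifs
  · exact Finset.sum_attach (Finset.univ.filter (· < j)) (fun i => (A i j : ℚ) • Lop n A i (eB n S))
  · rfl

lemma Lop_not_mem {j : Fin n} {S : Finset (Fin n)} (h : j ∉ S) :
    Lop n A j (eB n S) = eB n (insert j S) := by
  rw [Lop_single, if_neg h]

lemma Lop_mem {j : Fin n} {S : Finset (Fin n)} (h : j ∈ S) :
    Lop n A j (eB n S) =
      ∑ i ∈ Finset.univ.filter (· < j), (A i j : ℚ) • Lop n A i (eB n S) := by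
  rw [Lop_single, if_pos h]


lemma Lop_comm_aux : ∀ (m : ℕ) (j i : Fin n), i < j → j.val * n + i.val ≤ m →
    ∀ S, Lop n A i (Lop n A j (eB n S)) = Lop n A j (Lop n A i (eB n S)) := by
  intro m
  induction m using Nat.strong_induction_on with
  | _ m IH =>
  intro j i hij hm S
  have swap : ∀ a b : Fin n, a < j → b < j → ∀ T,
      Lop n A a (Lop n A b (eB n T)) = Lop n A b (Lop n A a (eB n T)) := by
    intro a b ha hb T
    have key : ∀ c d : Fin n, c < d → d < j →
        Lop n A c (Lop n A d (eB n T)) = Lop n A d (Lop n A c (eB n T)) := by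
      intro c d hcd hdj
      have hlt : d.val * n + c.val < m := by
        have h1 : d.val * n + c.val < (d.val + 1) * n := by
          have : c.val < n := c.isLt
          nlinarith
        have h2 : (d.val + 1) * n ≤ j.val * n :=
          Nat.mul_le_mul_right n hdj
        omega
      exact IH _ hlt d c hcd le_rfl T
    rcases lt_trichotomy a b with hab | rfl | hba
    · exact key a b hab hb
    · rfl
    · exact (key b a hba ha).symm
  have inner : ∀ k : Fin n, k < i → ∀ T,
      Lop n A k (Lop n A j (eB n T)) = Lop n A j (Lop n A k (eB n T)) := by
    intro k hk T
    have hlt : j.val * n + k.val < m := by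
      have : k.val < i.val := hk
      omega
    exact IH _ hlt j k (hk.trans hij) le_rfl T
  by_cases hjS : j ∈ S
  · by_cases hiS : i ∈ S
    · rw [Lop_mem n A hjS, Lop_mem n A hiS, map_sum, map_sum]
      simp only [map_smul]
      have lhs_eq : ∀ k ∈ Finset.univ.filter (· < j),
          (A k j : ℚ) • Lop n A i (Lop n A k (eB n S))
          = (A k j : ℚ) • ∑ l ∈ Finset.univ.filter (· < i),
              (A l i : ℚ) • Lop n A k (Lop n A l (eB n S)) := by
        intro k hk
        rw [Finset.mem_filter] at hk
        rw [swap i k hij hk.2 S, Lop_mem n A hiS, map_sum]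
        simp only [map_smul]
      have rhs_eq : ∀ l ∈ Finset.univ.filter (· < i),
          (A l i : ℚ) • Lop n A j (Lop n A l (eB n S))
          = (A l i : ℚ) • ∑ k ∈ Finset.univ.filter (· < j),
              (A k j : ℚ) • Lop n A l (Lop n A k (eB n S)) := by
        intro l hl
        rw [Finset.mem_filter] at hl
        rw [← inner l hl.2 S, Lop_mem n A hjS, map_sum]
        simp only [map_smul]
      rw [Finset.sum_congr rfl lhs_eq, Finset.sum_congr rfl rhs_eq]
      simp only [Finset.smul_sum]
      rw [Finset.sum_comm]
      apply Finset.sum_congr rfl; intro l hl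
      apply Finset.sum_congr rfl; intro k hk
      rw [Finset.mem_filter] at hk hl
      rw [swap k l hk.2 (hl.2.trans hij) S, smul_comm]
    · have hjiS : j ∈ insert i S := Finset.mem_insert_of_mem hjS
      rw [Lop_not_mem n A hiS, Lop_mem n A hjiS, Lop_mem n A hjS, map_sum]
      simp only [map_smul]
      apply Finset.sum_congr rfl; intro k hk
      rw [Finset.mem_filter] at hk
      rw [← Lop_not_mem n A hiS, swap k i hk.2 hij S]
  · by_cases hiS : i ∈ S
    · have hijS : i ∈ insert j S := Finset.mem_insert_of_mem hiS
      rw [Lop_not_mem n A hjS, Lop_mem n A hijS, Lop_mem n A hiS, map_sum]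
      simp only [map_smul]
      apply Finset.sum_congr rfl; intro k hk
      rw [Finset.mem_filter] at hk
      rw [← Lop_not_mem n A hjS, inner k hk.2 S]
    · have hij' : i ≠ j := ne_of_lt hij
      have h1 : i ∉ insert j S := by
        simp only [Finset.mem_insert]
        push_neg
        exact ⟨hij', hiS⟩
      have h2 : j ∉ insert i S := by
        simp only [Finset.mem_insert]
        push_neg
        exact ⟨hij'.symm, hjS⟩
      rw [Lop_not_mem n A hjS, Lop_not_mem n A h1,
          Lop_not_mem n A hiS, Lop_not_mem n A h2, Finset.insert_comm]

lemma Lop_comm_e (i j : Fin n) (S : Finset (Fin n)) :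
    Lop n A i (Lop n A j (eB n S)) = Lop n A j (Lop n A i (eB n S)) := by
  rcases lt_trichotomy i j with hij | rfl | hji
  · exact Lop_comm_aux n A (j.val * n + i.val) j i hij le_rfl S
  · rfl
  · exact (Lop_comm_aux n A (i.val * n + j.val) i j hji le_rfl S).symm

lemma Lop_apply_eB (f : MB n →ₗ[ℚ] MB n) (g : MB n →ₗ[ℚ] MB n)
    (h : ∀ S, f (eB n S) = g (eB n S)) : f = g := by
  apply Finsupp.lhom_ext
  intro S b
  have : (Finsupp.single S b : MB n) = b • eB n S := by
    rw [eB, Finsupp.smul_single, smul_eq_mul, mul_one]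
  rw [this, map_smul, map_smul, h]

lemma Lop_comm' (i j : Fin n) :
    (Lop n A i : Module.End ℚ (MB n)) * Lop n A j = Lop n A j * Lop n A i := by
  apply Lop_apply_eB
  intro S
  exact Lop_comm_e n A i j S

lemma Lop_sq (j : Fin n) :
    (Lop n A j : Module.End ℚ (MB n)) * Lop n A j
      = ∑ i ∈ Finset.univ.filter (· < j), (A i j : ℚ) • (Lop n A i * Lop n A j) := by
  apply Lop_apply_eB
  intro S
  have hmem : j ∈ insert j S := Finset.mem_insert_self j S
  by_cases hjS : j ∈ S
  · show Lop n A j (Lop n A j (eB n S)) = _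
    rw [Lop_mem n A hjS, map_sum]
    simp only [map_smul]
    have : ∀ k ∈ Finset.univ.filter (· < j),
        (A k j : ℚ) • Lop n A j (Lop n A k (eB n S))
        = (A k j : ℚ) • Lop n A k (Lop n A j (eB n S)) := by
      intro k _
      rw [Lop_comm_e]
    rw [Finset.sum_congr rfl this]
    simp [LinearMap.sum_apply, Module.End.mul_apply]
  · show Lop n A j (Lop n A j (eB n S)) = _
    rw [Lop_not_mem n A hjS, Lop_mem n A hmem]
    have : ∀ k ∈ Finset.univ.filter (· < j),
        (A k j : ℚ) • Lop n A k (eB n (insert j S))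
        = (A k j : ℚ) • Lop n A k (Lop n A j (eB n S)) := by
      intro k _
      rw [Lop_not_mem n A hjS]
    rw [Finset.sum_congr rfl this]
    simp [LinearMap.sum_apply, Module.End.mul_apply]

abbrev opsAlg : Subalgebra ℚ (Module.End ℚ (MB n)) :=
  Algebra.adjoin ℚ (Set.range (Lop n A))

instance opsComm : CommRing (opsAlg n A) :=
  Algebra.adjoinCommRingOfComm ℚ (by
    rintro _ ⟨i, rfl⟩ _ ⟨j, rfl⟩
    exact Lop_comm' n A i j)

def opEl (j : Fin n) : opsAlg n A :=
  ⟨Lop n A j, Algebra.subset_adjoin (Set.mem_range_self j)⟩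

def psiOps : MvPolynomial (Fin n) ℚ →ₐ[ℚ] opsAlg n A :=
  aeval (opEl n A)

def Psi : MvPolynomial (Fin n) ℚ →ₐ[ℚ] Module.End ℚ (MB n) :=
  (Subalgebra.val _).comp (psiOps n A)

lemma Psi_X (j : Fin n) : Psi n A (X j) = Lop n A j := by
  simp only [Psi, psiOps, AlgHom.comp_apply, aeval_X]
  rfl

lemma Psi_alphaQ (j : Fin n) :
    Psi n A (alphaQ n A j)
      = ∑ i ∈ Finset.univ.filter (· < j), (A i j : ℚ) • Lop n A i := by
  rw [alphaQ, map_sum]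
  apply Finset.sum_congr rfl
  intro i _
  rw [map_mul, Psi_X]
  rw [show (Psi n A) (C ((A i j : ℚ))) = algebraMap ℚ _ ((A i j : ℚ)) from
    (Psi n A).commutes _]
  rw [Algebra.smul_def]

lemma Psi_gen (j : Fin n) :
    Psi n A (X j ^ 2 - alphaQ n A j * X j) = 0 := by
  rw [map_sub, map_pow, map_mul, Psi_X, Psi_alphaQ]
  rw [pow_two, Lop_sq, Finset.sum_mul]
  simp only [smul_mul_assoc]
  rw [sub_self]

lemma Psi_ideal : ∀ a ∈ bottIdealQ n A, Psi n A a = 0 := by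
  intro a ha
  have hle : bottIdealQ n A ≤ RingHom.ker (Psi n A).toRingHom := by
    rw [bottIdealQ, Ideal.span_le]
    rintro _ ⟨j, rfl⟩
    exact Psi_gen n A j
  exact hle ha

def PsiB : BottRingQ n A →ₐ[ℚ] Module.End ℚ (MB n) :=
  Ideal.Quotient.liftₐ _ (Psi n A) (Psi_ideal n A)

def vB (S : Finset (Fin n)) : BottRingQ n A :=
  Ideal.Quotient.mk (bottIdealQ n A) (∏ i ∈ S, X i)

lemma prodOps_apply : ∀ S T : Finset (Fin n), (∀ i ∈ S, i ∉ T) →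
      ((↑(∏ i ∈ S, opEl n A i) : Module.End ℚ (MB n))) (eB n T) = eB n (S ∪ T) := by
  intro S
  induction S using Finset.induction_on with
  | empty =>
    intro T _
    simp only [Finset.prod_empty, OneMemClass.coe_one, Module.End.one_apply, Finset.empty_union]
  | insert a s ha iha =>
    intro T hT
    rw [Finset.prod_insert ha]
    have : ((↑(opEl n A a * ∏ i ∈ s, opEl n A i) : Module.End ℚ (MB n)))
        = Lop n A a * (↑(∏ i ∈ s, opEl n A i) : Module.End ℚ (MB n)) := by
      rw [MulMemClass.coe_mul]; rfl
    rw [this, Module.End.mul_apply, iha T (fun i hi => hT i (Finset.mem_insert_of_mem hi))]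
    have haT : a ∉ s ∪ T := by
      rw [Finset.mem_union]
      push_neg
      exact ⟨ha, hT a (Finset.mem_insert_self a s)⟩
    rw [Lop_not_mem n A haT, Finset.insert_union]

lemma PsiB_vB (S : Finset (Fin n)) : PsiB n A (vB n A S) (eB n ∅) = eB n S := by
  have h1 : PsiB n A (vB n A S) = Psi n A (∏ i ∈ S, X i) := by
    rw [PsiB, vB, Ideal.Quotient.liftₐ_apply]
    rfl
  rw [h1]
  have h2 : psiOps n A (∏ i ∈ S, X i) = ∏ i ∈ S, opEl n A i := by
    rw [map_prod]
    exact Finset.prod_congr rfl fun i _ => by rw [psiOps, aeval_X]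
  rw [Psi, AlgHom.comp_apply, h2]
  have := prodOps_apply n A S ∅ (by simp)
  simpa using this

def WB : BottRingQ n A →ₗ[ℚ] MB n where
  toFun z := PsiB n A z (eB n ∅)
  map_add' a b := by
    show PsiB n A (a + b) (eB n ∅) = PsiB n A a (eB n ∅) + PsiB n A b (eB n ∅)
    rw [map_add, LinearMap.add_apply]
  map_smul' c a := by
    show PsiB n A (c • a) (eB n ∅) = c • PsiB n A a (eB n ∅)
    rw [map_smul, LinearMap.smul_apply]

lemma vB_indep : LinearIndependent ℚ (vB n A) := by
  apply LinearIndependent.of_comp (WB n A)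
  have : (WB n A) ∘ (vB n A) = fun S => Finsupp.single S (1 : ℚ) := by
    funext S
    exact PsiB_vB n A S
  rw [this]
  have := (Finsupp.basisSingleOne (R := ℚ) (ι := Finset (Fin n))).linearIndependent
  rwa [Finsupp.coe_basisSingleOne] at this

abbrev cpId : Ideal (MvPolynomial (Fin n) ℚ) :=
  Ideal.span (Set.range fun j : Fin n => (X j : MvPolynomial (Fin n) ℚ) ^ 2)

def vC (S : Finset (Fin n)) : CPRing n :=
  Ideal.Quotient.mk (cpId n) (∏ i ∈ S, X i)

lemma mkQ_smul (I : Ideal (MvPolynomial (Fin n) ℚ)) (q : ℚ) (a : MvPolynomial (Fin n) ℚ) :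
    q • Ideal.Quotient.mk I a = Ideal.Quotient.mk I (C q * a) := by
  have h : q • Ideal.Quotient.mk I a = Ideal.Quotient.mk I (q • a) := rfl
  rw [h, MvPolynomial.smul_eq_C_mul]

lemma cy_mul_vC {j : Fin n} {S : Finset (Fin n)} (h : j ∈ S) :
    Ideal.Quotient.mk (cpId n) (X j * ∏ i ∈ S, X i) = 0 := by
  rw [Ideal.Quotient.eq_zero_iff_mem]
  have : (X j : MvPolynomial (Fin n) ℚ) * ∏ i ∈ S, X i = X j ^ 2 * ∏ i ∈ S.erase j, X i := by
    rw [← Finset.mul_prod_erase S _ h, pow_two]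
    ring
  rw [this]
  exact Ideal.mul_mem_right _ _ (Ideal.subset_span ⟨j, rfl⟩)

lemma mul_cy_mem_spanC (j : Fin n) :
    ∀ z ∈ Submodule.span ℚ (Set.range (vC n)),
      cy n j * z ∈ Submodule.span ℚ (Set.range (vC n)) := by
  intro z hz
  induction hz using Submodule.span_induction with
  | mem w hw =>
    obtain ⟨S, rfl⟩ := hw
    by_cases hjS : j ∈ S
    · have : cy n j * vC n S = 0 := by
        rw [cy, vC, ← map_mul]
        exact cy_mul_vC n hjS
      rw [this]
      exact Submodule.zero_mem _
    · have : cy n j * vC n S = vC n (insert j S) := by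
        rw [cy, vC, ← map_mul, vC, Finset.prod_insert hjS]
      rw [this]
      exact Submodule.subset_span ⟨insert j S, rfl⟩
  | zero => rw [mul_zero]; exact Submodule.zero_mem _
  | add a b _ _ ha hb => rw [mul_add]; exact Submodule.add_mem _ ha hb
  | smul c a _ ha =>
    have h1 : cy n j * c • a = c • (cy n j * a) := Algebra.mul_smul_comm c (cy n j) a
    rw [h1]
    exact Submodule.smul_mem _ c ha

lemma spanC : Submodule.span ℚ (Set.range (vC n)) = ⊤ := by
  rw [eq_top_iff]
  rintro z -
  obtain ⟨f, rfl⟩ := Ideal.Quotient.mk_surjective z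
  induction f using MvPolynomial.induction_on with
  | C a =>
    have : Ideal.Quotient.mk (cpId n) (C a) = a • vC n ∅ := by
      rw [vC, Finset.prod_empty, mkQ_smul, mul_one]
    rw [this]
    exact Submodule.smul_mem _ a (Submodule.subset_span ⟨∅, rfl⟩)
  | add p q hp hq => rw [map_add]; exact Submodule.add_mem _ hp hq
  | mul_X p j hp =>
    rw [map_mul]
    have : Ideal.Quotient.mk (cpId n) p * Ideal.Quotient.mk (cpId n) (X j)
        = cy n j * Ideal.Quotient.mk (cpId n) p := by rw [cy, mul_comm]
    rw [this]
    exact mul_cy_mem_spanC n j _ hp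

lemma mkQ_C (I : Ideal (MvPolynomial (Fin n) ℚ)) (a : ℚ) :
    Ideal.Quotient.mk I (C a) = algebraMap ℚ _ a := by
  rw [← MvPolynomial.algebraMap_eq]
  exact Ideal.Quotient.mk_algebraMap (R₁ := ℚ) I a

lemma map_alphaP (j : Fin n) :
    MvPolynomial.map (Int.castRingHom ℚ) (alphaP n A j) = alphaQ n A j := by
  rw [alphaP, alphaQ, map_sum]
  apply Finset.sum_congr rfl
  intro i _
  rw [map_mul, MvPolynomial.map_C, MvPolynomial.map_X]
  norm_num

lemma alphaQ_sq_mem (h : ∀ j : Fin n, balpha n A j ^ 2 = 0) (j : Fin n) :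
    alphaQ n A j ^ 2 ∈ bottIdealQ n A := by
  have h1 : alphaP n A j ^ 2 ∈ bottIdeal n A := by
    have hh := h j
    rw [balpha, ← map_pow, Ideal.Quotient.eq_zero_iff_mem] at hh
    exact hh
  have h2 : bottIdeal n A ≤
      Ideal.comap (MvPolynomial.map (Int.castRingHom ℚ)) (bottIdealQ n A) := by
    rw [bottIdeal, Ideal.span_le]
    rintro _ ⟨k, rfl⟩
    show MvPolynomial.map (Int.castRingHom ℚ) (X k ^ 2 - alphaP n A k * X k) ∈ bottIdealQ n A
    rw [map_sub, map_pow, map_mul, MvPolynomial.map_X, map_alphaP]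
    exact Ideal.subset_span ⟨k, rfl⟩
  have h3 := h2 h1
  rw [Ideal.mem_comap, map_pow, map_alphaP] at h3
  exact h3

def xsub (j : Fin n) : MvPolynomial (Fin n) ℚ := X j - C (1/2 : ℚ) * alphaQ n A j

def Fal : MvPolynomial (Fin n) ℚ →ₐ[ℚ] BottRingQ n A :=
  (Ideal.Quotient.mkₐ ℚ (bottIdealQ n A)).comp (aeval (xsub n A))

lemma xsub_sq (j : Fin n) :
    xsub n A j ^ 2 = (X j ^ 2 - alphaQ n A j * X j)
      + C (1/2 : ℚ) * C (1/2 : ℚ) * alphaQ n A j ^ 2 := by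
  have h2 : (C (1/2 : ℚ) : MvPolynomial (Fin n) ℚ) + C (1/2 : ℚ) = 1 := by
    rw [← map_add]
    norm_num
  rw [xsub]
  linear_combination (-(alphaQ n A j * X j)) * h2

lemma Fal_ker (h : ∀ j : Fin n, balpha n A j ^ 2 = 0) :
    ∀ a ∈ cpId n, Fal n A a = 0 := by
  intro a ha
  have hle : cpId n ≤ RingHom.ker (Fal n A).toRingHom := by
    rw [Ideal.span_le]
    rintro _ ⟨j, rfl⟩
    show Fal n A (X j ^ 2) = 0
    have h1 : Fal n A (X j ^ 2) = Ideal.Quotient.mk (bottIdealQ n A) (xsub n A j ^ 2) := by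
      rw [Fal, AlgHom.comp_apply, map_pow, aeval_X]
      rfl
    rw [h1, Ideal.Quotient.eq_zero_iff_mem, xsub_sq]
    exact Ideal.add_mem _ (Ideal.subset_span ⟨j, rfl⟩)
      (Ideal.mul_mem_left _ _ (alphaQ_sq_mem n A h j))
  exact hle ha

def phiA (h : ∀ j : Fin n, balpha n A j ^ 2 = 0) : CPRing n →ₐ[ℚ] BottRingQ n A :=
  Ideal.Quotient.liftₐ (cpId n) (Fal n A) (Fal_ker n A h)

lemma phiA_cy (h : ∀ j : Fin n, balpha n A j ^ 2 = 0) (j : Fin n) :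
    phiA n A h (cy n j) = bxQ n A j - (1/2 : ℚ) • balphaQ n A j := by
  have h1 : phiA n A h (cy n j) = Fal n A (X j) := by
    rw [phiA, cy, Ideal.Quotient.liftₐ_apply]
    rfl
  rw [h1, Fal, AlgHom.comp_apply, aeval_X]
  show Ideal.Quotient.mk (bottIdealQ n A) (xsub n A j)
    = Ideal.Quotient.mk (bottIdealQ n A) (X j)
      - (1/2 : ℚ) • Ideal.Quotient.mk (bottIdealQ n A) (alphaQ n A j)
  rw [mkQ_smul, xsub, map_sub]

lemma balphaQ_eq (j : Fin n) :
    balphaQ n A j = ∑ i ∈ Finset.univ.filter (· < j), (A i j : ℚ) • bxQ n A i := by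
  show Ideal.Quotient.mk (bottIdealQ n A) (alphaQ n A j) = _
  rw [alphaQ, map_sum]
  apply Finset.sum_congr rfl
  intro i _
  show Ideal.Quotient.mk (bottIdealQ n A) (C ((A i j : ℚ)) * X i)
    = (A i j : ℚ) • Ideal.Quotient.mk (bottIdealQ n A) (X i)
  rw [mkQ_smul]

lemma bxQ_mem_submodule (N : Submodule ℚ (BottRingQ n A))
    (hN : ∀ j, bxQ n A j - (1/2 : ℚ) • balphaQ n A j ∈ N) : ∀ j, bxQ n A j ∈ N := by
  have key : ∀ k : ℕ, ∀ j : Fin n, j.val < k → bxQ n A j ∈ N := by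
    intro k
    induction k with
    | zero => intro j hj; omega
    | succ k IH =>
      intro j hj
      have hα : balphaQ n A j ∈ N := by
        rw [balphaQ_eq]
        apply Submodule.sum_mem
        intro i hi
        rw [Finset.mem_filter] at hi
        have hik : i.val < k := by
          have : i.val < j.val := hi.2
          omega
        exact Submodule.smul_mem _ _ (IH i hik)
      have hrw : bxQ n A j
          = (bxQ n A j - (1/2 : ℚ) • balphaQ n A j) + (1/2 : ℚ) • balphaQ n A j := by
        abel
      rw [hrw]
      exact N.add_mem (hN j) (N.smul_mem _ hα)
  exact fun j => key (j.val + 1) j (by omega)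

lemma phiA_surj (h : ∀ j : Fin n, balpha n A j ^ 2 = 0) :
    Function.Surjective (phiA n A h) := by
  have hx : ∀ j, bxQ n A j ∈ Subalgebra.toSubmodule (phiA n A h).range := by
    apply bxQ_mem_submodule
    intro j
    rw [← phiA_cy n A h j]
    exact ⟨cy n j, rfl⟩
  intro z
  obtain ⟨f, rfl⟩ := Ideal.Quotient.mk_surjective z
  induction f using MvPolynomial.induction_on with
  | C a =>
    refine ⟨algebraMap ℚ _ a, ?_⟩
    rw [(phiA n A h).commutes a, mkQ_C]
  | add p q hp hq =>
    obtain ⟨p', hp'⟩ := hp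
    obtain ⟨q', hq'⟩ := hq
    exact ⟨p' + q', by rw [map_add, hp', hq', map_add]⟩
  | mul_X p j hp =>
    obtain ⟨p', hp'⟩ := hp
    obtain ⟨y, hy⟩ := (AlgHom.mem_range _).mp ((Subalgebra.mem_toSubmodule _).mp (hx j))
    refine ⟨p' * y, ?_⟩
    rw [map_mul, hp', hy, map_mul]
    rfl

lemma finiteCP : Module.Finite ℚ (CPRing n) := by
  constructor
  rw [← spanC n]
  exact Submodule.fg_span (Set.finite_range _)

lemma phiA_inj (h : ∀ j : Fin n, balpha n A j ^ 2 = 0) :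
    Function.Injective (phiA n A h) := by
  haveI := finiteCP n
  haveI hfinB : Module.Finite ℚ (BottRingQ n A) :=
    Module.Finite.of_surjective (phiA n A h).toLinearMap (phiA_surj n A h)
  have c1 : Module.finrank ℚ (CPRing n) ≤ Module.finrank ℚ (MB n) := by
    have hr : LinearMap.range (Finsupp.linearCombination ℚ (vC n)) = ⊤ := by
      rw [Finsupp.range_linearCombination, spanC n]
    have := LinearMap.finrank_range_le (Finsupp.linearCombination ℚ (vC n))
    rwa [hr, finrank_top] at this
  have c2 : Module.finrank ℚ (MB n) ≤ Module.finrank ℚ (BottRingQ n A) :=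
    LinearMap.finrank_le_finrank_of_injective
      (vB_indep n A)
  have c3 : Module.finrank ℚ (BottRingQ n A) ≤ Module.finrank ℚ (CPRing n) := by
    have hr : LinearMap.range (phiA n A h).toLinearMap = ⊤ :=
      LinearMap.range_eq_top.mpr (phiA_surj n A h)
    have := LinearMap.finrank_range_le (phiA n A h).toLinearMap
    rwa [hr, finrank_top] at this
  have hrank := LinearMap.finrank_range_add_finrank_ker (phiA n A h).toLinearMap
  have hr : LinearMap.range (phiA n A h).toLinearMap = ⊤ :=
    LinearMap.range_eq_top.mpr (phiA_surj n A h)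
  rw [hr, finrank_top] at hrank
  have hker0 : Module.finrank ℚ (LinearMap.ker (phiA n A h).toLinearMap) = 0 := by omega
  have hker : LinearMap.ker (phiA n A h).toLinearMap = ⊥ :=
    Submodule.finrank_eq_zero.mp hker0
  exact LinearMap.ker_eq_bot.mp hker

end Aux

theorem Q_trivial_of_alpha_sq_zero (n : ℕ) (hn : 1 ≤ n) (A : Fin n → Fin n → ℤ)
    (h : ∀ j : Fin n, balpha n A j ^ 2 = 0) :
    ∃ φ : CPRing n ≃+* BottRingQ n A,
      (∀ j : Fin n, φ (cy n j) = bxQ n A j - (1 / 2 : ℚ) • balphaQ n A j) ∧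
      φ '' (Submodule.span ℚ (Set.range (cy n)) : Set (CPRing n))
        = (Submodule.span ℚ (Set.range (bxQ n A)) : Set (BottRingQ n A)) := by
  refine ⟨(AlgEquiv.ofBijective (phiA n A h) ⟨phiA_inj n A h, phiA_surj n A h⟩).toRingEquiv,
    ?_, ?_⟩
  · intro j
    show phiA n A h (cy n j) = _
    exact phiA_cy n A h j
  · have hcoe : ⇑(AlgEquiv.ofBijective (phiA n A h)
        ⟨phiA_inj n A h, phiA_surj n A h⟩).toRingEquiv = ⇑(phiA n A h) := rfl
    rw [hcoe]
    have hsub : Submodule.map (phiA n A h).toLinearMap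
        (Submodule.span ℚ (Set.range (cy n)))
        = Submodule.span ℚ (Set.range (bxQ n A)) := by
      rw [Submodule.map_span]
      apply le_antisymm
      · rw [Submodule.span_le]
        rintro _ ⟨_, ⟨j, rfl⟩, rfl⟩
        show (phiA n A h) (cy n j) ∈ (Submodule.span ℚ (Set.range (bxQ n A)) : Set _)
        rw [phiA_cy]
        refine Submodule.sub_mem _ (Submodule.subset_span ⟨j, rfl⟩)
          (Submodule.smul_mem _ _ ?_)
        rw [balphaQ_eq]
        exact Submodule.sum_mem _ fun i _ =>
          Submodule.smul_mem _ _ (Submodule.subset_span ⟨i, rfl⟩)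
      · rw [Submodule.span_le]
        rintro _ ⟨j, rfl⟩
        apply bxQ_mem_submodule n A
          (Submodule.span ℚ (⇑(phiA n A h).toLinearMap '' Set.range (cy n)))
        intro j'
        rw [← phiA_cy n A h j']
        exact Submodule.subset_span ⟨cy n j', ⟨j', rfl⟩, rfl⟩
    calc ⇑(phiA n A h) '' (Submodule.span ℚ (Set.range (cy n)) : Set (CPRing n))
        = (Submodule.map (phiA n A h).toLinearMap
            (Submodule.span ℚ (Set.range (cy n))) : Set (BottRingQ n A)) := by
          rw [Submodule.map_coe]
          rfl
      _ = (Submodule.span ℚ (Set.range (bxQ n A)) : Set (BottRingQ n A)) := by rw [hsub]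

end
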